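/- Let C and C̄ form a timelike (1,3)-Bertrand pair in E⁴₂ via the map φ and real constants α, β with c̄(φ(s)) = c(s) + α·n₁(s) + β·n₃(s), and suppose the real constant γ satisfies γ·(α·k₂(s) - β·k₃(s)) - α·k₁(s) = 1 and α·k₂(s) - β·k₃(s) ≠ 0 for all s, with γ² > 1. Then (φ'(s))² = (γ² - 1)·(α·k₂(s) - β·k₃(s))² for all s ∈ ℝ. -/

import Mathlib

noncomputable section

/-- The indefinite metric of semi-Euclidean space `E⁴₂`:
`g(v,w) = -v₁w₁ - v₂w₂ + v₃w₃ + v₄w₄`. -/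
def g4 (v w : Fin 4 → ℝ) : ℝ :=
  -(v 0 * w 0) - v 1 * w 1 + v 2 * w 2 + v 3 * w 3

/-- The semi-Euclidean norm `‖v‖ = √|g(v,v)|` in `E⁴₂`. -/
def nrm4 (v : Fin 4 → ℝ) : ℝ := Real.sqrt |g4 v v|

/-- A `C^∞`-special timelike Frenet curve in `E⁴₂`: a unit-speed timelike curve
with Frenet frame `t, n₁, n₂, n₃` (with `t, n₁` timelike and `n₂, n₃` spacelike)
and nowhere-vanishing curvatures `k₁, k₂, k₃` satisfying the Frenet equations
`t' = -k₁·n₁`, `n₁' = k₁·t + k₂·n₂`, `n₂' = k₂·n₁ + k₃·n₃`, `n₃' = -k₃·n₂`. -/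
structure TimelikeFrenetE42 where
  c : ℝ → Fin 4 → ℝ
  t : ℝ → Fin 4 → ℝ
  n1 : ℝ → Fin 4 → ℝ
  n2 : ℝ → Fin 4 → ℝ
  n3 : ℝ → Fin 4 → ℝ
  k1 : ℝ → ℝ
  k2 : ℝ → ℝ
  k3 : ℝ → ℝ
  smooth_c : ContDiff ℝ (⊤ : ℕ∞) c
  smooth_t : ContDiff ℝ (⊤ : ℕ∞) t
  smooth_n1 : ContDiff ℝ (⊤ : ℕ∞) n1
  smooth_n2 : ContDiff ℝ (⊤ : ℕ∞) n2
  smooth_n3 : ContDiff ℝ (⊤ : ℕ∞) n3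
  smooth_k1 : ContDiff ℝ (⊤ : ℕ∞) k1
  smooth_k2 : ContDiff ℝ (⊤ : ℕ∞) k2
  smooth_k3 : ContDiff ℝ (⊤ : ℕ∞) k3
  deriv_c : ∀ s, HasDerivAt c (t s) s
  unit_t : ∀ s, g4 (t s) (t s) = -1
  unit_n1 : ∀ s, g4 (n1 s) (n1 s) = -1
  unit_n2 : ∀ s, g4 (n2 s) (n2 s) = 1
  unit_n3 : ∀ s, g4 (n3 s) (n3 s) = 1
  orth_t_n1 : ∀ s, g4 (t s) (n1 s) = 0
  orth_t_n2 : ∀ s, g4 (t s) (n2 s) = 0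
  orth_t_n3 : ∀ s, g4 (t s) (n3 s) = 0
  orth_n1_n2 : ∀ s, g4 (n1 s) (n2 s) = 0
  orth_n1_n3 : ∀ s, g4 (n1 s) (n3 s) = 0
  orth_n2_n3 : ∀ s, g4 (n2 s) (n3 s) = 0
  k1_ne : ∀ s, k1 s ≠ 0
  k2_ne : ∀ s, k2 s ≠ 0
  k3_ne : ∀ s, k3 s ≠ 0
  frenet_t : ∀ s, HasDerivAt t (-(k1 s) • n1 s) s
  frenet_n1 : ∀ s, HasDerivAt n1 (k1 s • t s + k2 s • n2 s) s
  frenet_n2 : ∀ s, HasDerivAt n2 (k2 s • n1 s + k3 s • n3 s) s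
  frenet_n3 : ∀ s, HasDerivAt n3 (-(k3 s) • n2 s) s

/-- For a timelike `(1,3)`-Bertrand pair in `E⁴₂` with constant `α, β` and a constant
`γ` with `γ² > 1` satisfying `γ·(α·k₂ - β·k₃) - α·k₁ = 1` and `α·k₂ - β·k₃ ≠ 0`
everywhere: `(φ'(s))² = (γ² - 1)·(α·k₂(s) - β·k₃(s))²` for all `s`. -/

lemma g4_smul_self (a : ℝ) (x : Fin 4 → ℝ) : g4 (a • x) (a • x) = a ^ 2 * g4 x x := by
  simp [g4, Pi.smul_apply, smul_eq_mul]; ring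

lemma g4_comb_self (a b : ℝ) (x y : Fin 4 → ℝ) :
    g4 (a • x + b • y) (a • x + b • y) =
      a ^ 2 * g4 x x + 2 * a * b * g4 x y + b ^ 2 * g4 y y := by
  simp [g4, Pi.add_apply, Pi.smul_apply, smul_eq_mul]; ring

theorem bertrand13_E42_phi_deriv_sq
    (C Cb : TimelikeFrenetE42) (φ : ℝ → ℝ) (α β γ : ℝ)
    (hφ : ContDiff ℝ (⊤ : ℕ∞) φ) (hφ' : ∀ s, deriv φ s ≠ 0)
    (hpos : ∀ s, Cb.c (φ s) = C.c s + α • C.n1 s + β • C.n3 s)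
    (hspan : ∀ s, Submodule.span ℝ ({Cb.n1 (φ s), Cb.n3 (φ s)} : Set (Fin 4 → ℝ)) =
      Submodule.span ℝ ({C.n1 s, C.n3 s} : Set (Fin 4 → ℝ)))
    (hγ2 : γ ^ 2 > 1)
    (hne : ∀ s, α * C.k2 s - β * C.k3 s ≠ 0)
    (hγ : ∀ s, γ * (α * C.k2 s - β * C.k3 s) - α * C.k1 s = 1) :
    ∀ s, (deriv φ s) ^ 2 = (γ ^ 2 - 1) * (α * C.k2 s - β * C.k3 s) ^ 2 := by
  intro s
  set p := deriv φ s with hp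
  have hφd : HasDerivAt φ p s := ((hφ.differentiable (by simp)) s).hasDerivAt
  have h1 : HasDerivAt (fun u => Cb.c (φ u)) (p • Cb.t (φ s)) s :=
    (Cb.deriv_c (φ s)).scomp s hφd
  have h2 : HasDerivAt (fun u => C.c u + α • C.n1 u + β • C.n3 u)
      (C.t s + α • (C.k1 s • C.t s + C.k2 s • C.n2 s) + β • (-(C.k3 s) • C.n2 s)) s :=
    ((C.deriv_c s).add ((C.frenet_n1 s).const_smul α)).add
      ((C.frenet_n3 s).const_smul β)
  have h1' : HasDerivAt (fun u => C.c u + α • C.n1 u + β • C.n3 u)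
      (p • Cb.t (φ s)) s := by
    simpa only [hpos] using h1
  have key : p • Cb.t (φ s)
      = (1 + α * C.k1 s) • C.t s + (α * C.k2 s - β * C.k3 s) • C.n2 s := by
    rw [h1'.unique h2]; module
  have e1 : g4 (p • Cb.t (φ s)) (p • Cb.t (φ s))
      = g4 ((1 + α * C.k1 s) • C.t s + (α * C.k2 s - β * C.k3 s) • C.n2 s)
          ((1 + α * C.k1 s) • C.t s + (α * C.k2 s - β * C.k3 s) • C.n2 s) := by
    rw [key]
  rw [g4_smul_self, g4_comb_self, Cb.unit_t, C.unit_t, C.unit_n2, C.orth_t_n2] at e1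
  have hg := hγ s
  linear_combination (-1 : ℝ) * e1 - (1 + α * C.k1 s + γ * (α * C.k2 s - β * C.k3 s)) * hg
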